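/- Let x : ℝ → ℝ^n be a continuous curve, W : ℝ^n → ℝ, N1, N2 : ℝ^n → ℝ continuous nonnegative functions, γ > 0, and let E := { y ∈ ℝ^n : N1(y) = 0 and N2(y) = 0 } be nonempty. Suppose for every t ≥ 0 the map t ↦ W(x(t)) is differentiable with (d/dt)W(x(t)) ≤ -γ·(N1(x(t)) + N2(x(t))), W(x(t)) ≥ 0 for all t ≥ 0, and there exist T_U ≥ 0 and c > 0 such that N1(x(t)) + N2(x(t)) ≥ c·dist(x(t), E)² for all t ≥ T_U. Let W∞ := lim_{t→∞} W(x(t)) (which exists since t ↦ W(x(t)) is nonincreasing and bounded below). Then the function t ↦ dist(x(t), E)² is integrable on [T_U, ∞) with ∫_{T_U}^∞ dist(x(t), E)² dt ≤ (W(x(0)) - W∞)/(γ·c). -/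

import Mathlib

open Filter MeasureTheory

theorem stmt_8 {n : ℕ} (x : ℝ → EuclideanSpace ℝ (Fin n)) (hx : Continuous x)
    (W N1 N2 : EuclideanSpace ℝ (Fin n) → ℝ)
    (hN1c : Continuous N1) (hN2c : Continuous N2)
    (hN1 : ∀ y, 0 ≤ N1 y) (hN2 : ∀ y, 0 ≤ N2 y)
    (γ : ℝ) (hγ : 0 < γ)
    (E : Set (EuclideanSpace ℝ (Fin n)))
    (hE : E = {y | N1 y = 0 ∧ N2 y = 0})
    (hEne : E.Nonempty)
    (w' : ℝ → ℝ)
    (hd : ∀ t, 0 ≤ t → HasDerivAt (fun s => W (x s)) (w' t) t)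
    (hineq : ∀ t, 0 ≤ t → w' t ≤ -γ * (N1 (x t) + N2 (x t)))
    (hWnn : ∀ t, 0 ≤ t → 0 ≤ W (x t))
    (TU : ℝ) (hTU : 0 ≤ TU) (c : ℝ) (hc : 0 < c)
    (heb : ∀ t, TU ≤ t → c * Metric.infDist (x t) E ^ 2 ≤ N1 (x t) + N2 (x t))
    (Winf : ℝ)
    (hWinf : Tendsto (fun t => W (x t)) atTop (nhds Winf)) :
    IntegrableOn (fun t => Metric.infDist (x t) E ^ 2) (Set.Ici TU) ∧
    ∫ t in Set.Ici TU, Metric.infDist (x t) E ^ 2 ≤ (W (x 0) - Winf) / (γ * c) := by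
  set f : ℝ → ℝ := fun t => Metric.infDist (x t) E ^ 2 with hfdef
  have hf : Continuous f := ((Metric.continuous_infDist_pt E).comp hx).pow 2
  have hfnn : ∀ t, 0 ≤ f t := fun t => sq_nonneg _
  -- W ∘ x is antitone on [0, ∞)
  have hWanti : AntitoneOn (fun t => W (x t)) (Set.Ici (0:ℝ)) := by
    apply antitoneOn_of_deriv_nonpos (convex_Ici 0)
    · exact fun t ht => ((hd t ht).continuousAt).continuousWithinAt
    · intro t ht
      rw [interior_Ici] at ht
      exact (hd t ht.le).differentiableAt.differentiableWithinAt
    · intro t ht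
      rw [interior_Ici] at ht
      rw [(hd t ht.le).deriv]
      have := hineq t ht.le
      nlinarith [hN1 (x t), hN2 (x t)]
  -- Winf ≤ W (x b) for all b ≥ 0
  have hWinf_le : ∀ b, 0 ≤ b → Winf ≤ W (x b) := by
    intro b hb
    refine le_of_tendsto hWinf ?_
    filter_upwards [eventually_ge_atTop b] with t ht
    exact hWanti hb (hb.trans ht) ht
  -- F : running integral of f
  set F : ℝ → ℝ := fun t => ∫ s in TU..t, f s with hFdef
  have hF : ∀ t : ℝ, HasDerivAt F (f t) t := by
    intro t
    exact intervalIntegral.integral_hasDerivAt_right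
      (hf.intervalIntegrable _ _) (hf.stronglyMeasurableAtFilter _ _) hf.continuousAt
  -- g := W∘x + γ c F is antitone on [TU, ∞)
  have hganti : AntitoneOn (fun t => W (x t) + γ * c * F t) (Set.Ici TU) := by
    apply antitoneOn_of_deriv_nonpos (convex_Ici TU)
    · intro t ht
      exact (((hd t (hTU.trans ht)).continuousAt).add
        (((hF t).continuousAt).const_mul _)).continuousWithinAt
    · intro t ht
      rw [interior_Ici] at ht
      exact ((hd t (hTU.trans ht.le)).differentiableAt.add
        ((hF t).differentiableAt.const_mul _)).differentiableWithinAt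
    · intro t ht
      rw [interior_Ici] at ht
      have hD : HasDerivAt (fun t => W (x t) + γ * c * F t) (w' t + γ * c * f t) t :=
        (hd t (hTU.trans ht.le)).add (((hF t).const_mul (γ * c)))
      rw [hD.deriv]
      have h1 := hineq t (hTU.trans ht.le)
      have h2 : c * f t ≤ N1 (x t) + N2 (x t) := heb t ht.le
      nlinarith [mul_le_mul_of_nonneg_left h2 hγ.le]
  -- key bound: ∀ b ≥ TU, γ c F b ≤ W(x 0) - Winf
  have key : ∀ b, TU ≤ b → F b ≤ (W (x 0) - Winf) / (γ * c) := by
    intro b hb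
    have h1 : W (x b) + γ * c * F b ≤ W (x TU) + γ * c * F TU :=
      hganti (Set.self_mem_Ici) hb hb
    have hFTU : F TU = 0 := intervalIntegral.integral_same
    have h2 : W (x TU) ≤ W (x 0) := hWanti Set.self_mem_Ici hTU hTU
    have h3 : Winf ≤ W (x b) := hWinf_le b (hTU.trans hb)
    rw [le_div_iff₀ (by positivity)]
    rw [hFTU] at h1
    nlinarith
  -- norm integral equals F
  have hnorm : ∀ b, (∫ s in TU..b, ‖f s‖) = F b := by
    intro b
    simp only [Real.norm_eq_abs]
    congr 1
    ext s
    exact abs_of_nonneg (hfnn s)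
  have hInt : IntegrableOn f (Set.Ioi TU) := by
    apply integrableOn_Ioi_of_intervalIntegral_norm_bounded
      ((W (x 0) - Winf) / (γ * c)) TU
      (fun i : ℝ => (hf.intervalIntegrable _ _).1) tendsto_id
    filter_upwards [eventually_ge_atTop TU] with b hb
    rw [hnorm]
    exact key b hb
  have hIntIci : IntegrableOn f (Set.Ici TU) := by
    rwa [← integrableOn_Ici_iff_integrableOn_Ioi] at hInt
  refine ⟨hIntIci, ?_⟩
  rw [MeasureTheory.integral_Ici_eq_integral_Ioi]
  have htend : Tendsto (fun b => ∫ s in TU..b, f s) atTop (nhds (∫ s in Set.Ioi TU, f s)) :=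
    intervalIntegral_tendsto_integral_Ioi TU hInt tendsto_id
  refine le_of_tendsto htend ?_
  filter_upwards [eventually_ge_atTop TU] with b hb
  exact key b hb
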